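/- Let f be a positive semidefinite n-ary form of degree 2d that is not a sum of squares of forms, and let p be an irreducible indefinite form of degree r in ℝ[x_1,…,x_n] (i.e., p takes both positive and negative values). Then the form p^2 f of degree 2d+2r is positive semidefinite and not a sum of squares of forms. -/

import Mathlib

open MvPolynomial Finset


lemma my_eval_aeval {n : ℕ} (x : Fin n → ℝ) (v : Fin n → MvPolynomial (Fin n) ℝ)
    (q : MvPolynomial (Fin n) ℝ) :
    eval x (aeval v q) = eval (fun i => eval x (v i)) q := by
  induction q using MvPolynomial.induction_on with
  | C a => simp
  | add p q hp hq =>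
    rw [map_add, map_add, map_add, hp, hq]
  | mul_X p i hp =>
    rw [map_mul, aeval_X, map_mul, map_mul, eval_X, hp]

lemma eq_zero_of_eval_zero_on_open : ∀ {m : ℕ} (q : MvPolynomial (Fin m) ℝ)
    (U : Set (Fin m → ℝ)), IsOpen U → U.Nonempty → (∀ x ∈ U, eval x q = 0) → q = 0 := by
  intro m
  induction m with
  | zero =>
    rintro q U _ ⟨x₀, hx₀⟩ hz
    apply MvPolynomial.funext
    intro x
    have hx : x = x₀ := funext fun i => i.elim0
    rw [hx, hz x₀ hx₀, map_zero]
  | succ m ih =>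
    rintro q U hU ⟨x₀, hx₀⟩ hz
    obtain ⟨ε, hε, hball⟩ := Metric.isOpen_iff.mp hU x₀ hx₀
    set Q := finSuccEquiv ℝ m q with hQ
    have key : ∀ y ∈ Metric.ball (Fin.tail x₀) ε, ∀ k, eval y (Q.coeff k) = 0 := by
      intro y hy k
      have hPy : Q.map (MvPolynomial.eval y) = 0 := by
        apply Polynomial.eq_zero_of_infinite_isRoot
        refine Set.Infinite.mono ?_ (Set.Ioo_infinite (show x₀ 0 - ε < x₀ 0 + ε by linarith))
        intro t ht
        have hmem : Fin.cons t y ∈ Metric.ball x₀ ε := by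
          rw [Metric.mem_ball, dist_pi_lt_iff hε]
          intro i
          refine Fin.cases ?_ ?_ i
          · simpa [Real.dist_eq, abs_lt, Fin.cons_zero] using
              ⟨by linarith [ht.1], by linarith [ht.2]⟩
          · intro j
            have := (dist_pi_lt_iff hε).mp (Metric.mem_ball.mp hy) j
            simpa [Fin.cons_succ, Fin.tail] using this
        have := hz _ (hball hmem)
        rw [eval_eq_eval_mv_eval'] at this
        exact this
      rw [← Polynomial.coeff_map, hPy, Polynomial.coeff_zero]
    have hcoeff : ∀ k, Q.coeff k = 0 := fun k =>
      ih (Q.coeff k) (Metric.ball (Fin.tail x₀) ε) Metric.isOpen_ball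
        ⟨_, Metric.mem_ball_self hε⟩ (fun y hy => key y hy k)
    have hQ0 : Q = 0 := Polynomial.ext fun k => by simp [hcoeff k]
    have := congrArg (finSuccEquiv ℝ m).symm hQ0
    simpa [hQ] using this


lemma isHomogeneous_of_mul_left {n : ℕ} {p g : MvPolynomial (Fin n) ℝ} {r D : ℕ}
    (hp : p.IsHomogeneous r) (hp0 : p ≠ 0) (hpg : (p * g).IsHomogeneous D) :
    g.IsHomogeneous (D - r) := by
  have hsum := sum_homogeneousComponent g
  have hcomp : ∀ k, r + k ≠ D → homogeneousComponent k g = 0 := by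
    intro k hk
    have h1 : p * g = ∑ i ∈ range (g.totalDegree + 1), p * homogeneousComponent i g := by
      rw [← Finset.mul_sum, hsum]
    have h2 : homogeneousComponent (r + k) (p * g) = 0 := by
      rw [homogeneousComponent_of_mem ((mem_homogeneousSubmodule _ _).mpr hpg), if_neg]
      omega
    have h3 : homogeneousComponent (r + k) (p * g) = p * homogeneousComponent k g := by
      rw [h1, map_sum, Finset.sum_eq_single k]
      · rw [homogeneousComponent_of_mem ((mem_homogeneousSubmodule _ _).mpr
          (hp.mul (homogeneousComponent_isHomogeneous k g))), if_pos rfl]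
      · intro b _ hb
        rw [homogeneousComponent_of_mem ((mem_homogeneousSubmodule _ _).mpr
          (hp.mul (homogeneousComponent_isHomogeneous b g))), if_neg (by omega)]
      · intro hk'
        rw [show (homogeneousComponent k) g = 0 from
          homogeneousComponent_eq_zero _ _ (by simpa using hk'), mul_zero, map_zero]
    have := h3.symm.trans h2
    rcases mul_eq_zero.mp this with h | h
    · exact absurd h hp0
    · exact h
  have hg : g = homogeneousComponent (D - r) g := by
    conv_lhs => rw [← hsum]
    rw [Finset.sum_eq_single (D - r)]
    · intro b _ hb
      exact hcomp b (by omega)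
    · intro h
      exact homogeneousComponent_eq_zero _ _ (by simp at h; omega)
  exact hg ▸ homogeneousComponent_isHomogeneous (D - r) g

lemma cont_cons_fst {m : ℕ} (y : Fin m → ℝ) :
    Continuous fun t : ℝ => (Fin.cons t y : Fin (m + 1) → ℝ) := by
  refine continuous_pi fun i => ?_
  refine Fin.cases ?_ ?_ i
  · simpa using continuous_id'
  · intro j; simpa using continuous_const

lemma cont_cons_snd {m : ℕ} (t : ℝ) :
    Continuous fun y : Fin m → ℝ => (Fin.cons t y : Fin (m + 1) → ℝ) := by
  refine continuous_pi fun i => ?_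
  refine Fin.cases ?_ ?_ i
  · simpa using continuous_const
  · intro j; simpa using continuous_apply j

lemma dvd_of_vanish_aux {m : ℕ} (p h : MvPolynomial (Fin (m + 1)) ℝ)
    (hirr : Irreducible p)
    (hvan : ∀ x, eval x p = 0 → eval x h = 0)
    (y₀ : Fin m → ℝ) (α β : ℝ)
    (hα : 0 < eval (Fin.cons α y₀) p) (hβ : eval (Fin.cons β y₀) p < 0) :
    p ∣ h := by
  classical
  set R₀ := MvPolynomial (Fin m) ℝ
  have irredP : Irreducible (finSuccEquiv ℝ m p) := hirr.map (finSuccEquiv ℝ m)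
  have hdeg : 1 ≤ (finSuccEquiv ℝ m p).natDegree := by
    by_contra hcon
    push_neg at hcon
    have h0 : (finSuccEquiv ℝ m p).natDegree = 0 := by omega
    have hPC := Polynomial.eq_C_of_natDegree_eq_zero h0
    have e1 : eval (Fin.cons α y₀) p = eval y₀ ((finSuccEquiv ℝ m p).coeff 0) := by
      rw [eval_eq_eval_mv_eval', hPC]; simp
    have e2 : eval (Fin.cons β y₀) p = eval y₀ ((finSuccEquiv ℝ m p).coeff 0) := by
      rw [eval_eq_eval_mv_eval', hPC]; simp
    rw [e1] at hα
    rw [e2] at hβ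
    linarith
  have prim : (finSuccEquiv ℝ m p).IsPrimitive := by
    intro q hq
    obtain ⟨t, ht⟩ := hq
    rcases irredP.isUnit_or_isUnit ht with hu | hu
    · exact Polynomial.isUnit_C.mp hu
    · exfalso
      have hle : (finSuccEquiv ℝ m p).natDegree ≤ 0 := by
        calc (finSuccEquiv ℝ m p).natDegree = (Polynomial.C q * t).natDegree := by rw [ht]
        _ ≤ (Polynomial.C q).natDegree + t.natDegree := Polynomial.natDegree_mul_le
        _ ≤ 0 := by
            rw [Polynomial.natDegree_C, Polynomial.natDegree_eq_zero_of_isUnit hu]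
      omega
  letI : NormalizationMonoid R₀ := UniqueFactorizationMonoid.normalizationMonoid.toNormalizationMonoid
  letI := UniqueFactorizationMonoid.toNormalizedGCDMonoid R₀
  set K := FractionRing R₀
  set φ := algebraMap R₀ K with hφ
  have irredPk : Irreducible ((finSuccEquiv ℝ m p).map φ) :=
    (prim.irreducible_iff_irreducible_map_fraction_map (K := K)).mp irredP
  have hPkHk : (finSuccEquiv ℝ m p).map φ ∣ (finSuccEquiv ℝ m h).map φ := by
    by_contra hnd
    have hcop : IsCoprime ((finSuccEquiv ℝ m p).map φ) ((finSuccEquiv ℝ m h).map φ) :=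
      (irredPk.coprime_iff_not_dvd).mpr hnd
    obtain ⟨U0, V0, hbez⟩ := hcop
    obtain ⟨cU, hcU⟩ := IsLocalization.integerNormalization_map_to_map (nonZeroDivisors R₀) U0
    obtain ⟨cV, hcV⟩ := IsLocalization.integerNormalization_map_to_map (nonZeroDivisors R₀) V0
    rw [Algebra.smul_def, Polynomial.algebraMap_apply, ← hφ] at hcU hcV
    set ce : R₀ := (cU : R₀) * (cV : R₀) with hce_def
    have hce : ce ≠ 0 := nonZeroDivisors.ne_zero (mul_mem cU.2 cV.2)
    have hint : (IsLocalization.integerNormalization (nonZeroDivisors R₀) U0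
          * Polynomial.C (cV : R₀)) * finSuccEquiv ℝ m p
        + (IsLocalization.integerNormalization (nonZeroDivisors R₀) V0
          * Polynomial.C (cU : R₀)) * finSuccEquiv ℝ m h
        = Polynomial.C ce := by
      apply Polynomial.map_injective φ (IsFractionRing.injective R₀ K)
      simp only [Polynomial.map_add, Polynomial.map_mul, Polynomial.map_C, hcU, hcV, hce_def,
        map_mul]
      linear_combination Polynomial.C (φ (cU : R₀)) * Polynomial.C (φ (cV : R₀)) * hbez
    set V : Set (Fin m → ℝ) :=
      {y | 0 < eval (Fin.cons α y) p ∧ eval (Fin.cons β y) p < 0} with hV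
    have hVopen : IsOpen V := by
      apply IsOpen.inter
      · exact isOpen_lt continuous_const ((p.continuous_eval).comp (cont_cons_snd α))
      · exact isOpen_lt ((p.continuous_eval).comp (cont_cons_snd β)) continuous_const
    have hy₀V : y₀ ∈ V := ⟨hα, hβ⟩
    have hvanc : ∀ y ∈ V, eval y ce = 0 := by
      intro y hy
      have hcont : Continuous fun t : ℝ => eval (Fin.cons t y : Fin (m + 1) → ℝ) p :=
        (p.continuous_eval).comp (cont_cons_fst y)
      have hmem : (0 : ℝ) ∈ Set.uIcc (eval (Fin.cons α y) p) (eval (Fin.cons β y) p) :=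
        Set.mem_uIcc.mpr (Or.inr ⟨hy.2.le, hy.1.le⟩)
      obtain ⟨t, _, ht0⟩ := intermediate_value_uIcc (hcont.continuousOn) hmem
      have ht : eval (Fin.cons t y) p = 0 := ht0
      have hth : eval (Fin.cons t y) h = 0 := hvan _ ht
      have := congrArg
        (fun Q : Polynomial R₀ => Polynomial.eval t (Q.map (MvPolynomial.eval y))) hint
      simp only [Polynomial.map_add, Polynomial.map_mul, Polynomial.map_C, Polynomial.eval_add,
        Polynomial.eval_mul, Polynomial.eval_C, ← eval_eq_eval_mv_eval'] at this
      rw [ht, hth, mul_zero, mul_zero, add_zero] at this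
      exact this.symm
    exact hce (eq_zero_of_eval_zero_on_open ce V hVopen ⟨y₀, hy₀V⟩ hvanc)
  obtain ⟨G, hG⟩ := hPkHk
  obtain ⟨s, hs⟩ := IsLocalization.integerNormalization_map_to_map (nonZeroDivisors R₀) G
  rw [Algebra.smul_def, Polynomial.algebraMap_apply, ← hφ] at hs
  have hPCH : finSuccEquiv ℝ m p * IsLocalization.integerNormalization (nonZeroDivisors R₀) G
      = Polynomial.C (s : R₀) * finSuccEquiv ℝ m h := by
    apply Polynomial.map_injective φ (IsFractionRing.injective R₀ K)
    simp only [Polynomial.map_mul, Polynomial.map_C, hs, hG]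
    ring
  have hprime : Prime (finSuccEquiv ℝ m p) :=
    UniqueFactorizationMonoid.irreducible_iff_prime.mp irredP
  have hdvd2 : finSuccEquiv ℝ m p ∣ Polynomial.C (s : R₀) * finSuccEquiv ℝ m h :=
    ⟨_, hPCH.symm⟩
  rcases hprime.2.2 _ _ hdvd2 with hd | hd
  · exfalso
    have hs0 : (s : R₀) ≠ 0 := nonZeroDivisors.ne_zero s.2
    have := Polynomial.natDegree_le_of_dvd hd (by simpa using hs0)
    simp only [Polynomial.natDegree_C] at this
    omega
  · obtain ⟨T, hT⟩ := hd
    refine ⟨(finSuccEquiv ℝ m).symm T, ?_⟩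
    apply (finSuccEquiv ℝ m).injective
    simp [hT]

/-- Key lemma: an irreducible indefinite real polynomial divides every polynomial
vanishing on its real zero set. -/
lemma dvd_of_vanish {n : ℕ} (p h : MvPolynomial (Fin n) ℝ)
    (hirr : Irreducible p) (a b : Fin n → ℝ)
    (ha : 0 < eval a p) (hb : eval b p < 0)
    (hvan : ∀ x, eval x p = 0 → eval x h = 0) : p ∣ h := by
  classical
  cases n with
  | zero =>
    exfalso
    have hab : a = b := funext fun i => i.elim0
    rw [hab] at ha
    linarith
  | succ m =>
    -- the direction of sign change
    set w : Fin (m + 1) → ℝ := fun i => a i - b i with hw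
    have hwne : ∃ i₀, w i₀ ≠ 0 := by
      by_contra hcon
      push_neg at hcon
      have : a = b := funext fun i => by have := hcon i; simp [hw] at this; linarith
      rw [this] at ha; linarith
    obtain ⟨i₀, hi₀⟩ := hwne
    set σ : Equiv.Perm (Fin (m + 1)) := Equiv.swap 0 i₀ with hσ
    -- substitution polynomials
    set v : Fin (m + 1) → MvPolynomial (Fin (m + 1)) ℝ :=
      fun i => C (w i) * X 0 + (if i = i₀ then 0 else X (σ i)) with hv
    set u : Fin (m + 1) → MvPolynomial (Fin (m + 1)) ℝ :=
      fun j => if j = 0 then C (w i₀)⁻¹ * X i₀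
        else X (σ j) - C (w (σ j)) * (C (w i₀)⁻¹ * X i₀) with hu
    -- the corresponding point transformations
    set S : (Fin (m + 1) → ℝ) → (Fin (m + 1) → ℝ) :=
      fun x i => w i * x 0 + (if i = i₀ then 0 else x (σ i)) with hS
    set S' : (Fin (m + 1) → ℝ) → (Fin (m + 1) → ℝ) :=
      fun x j => if j = 0 then (w i₀)⁻¹ * x i₀
        else x (σ j) - w (σ j) * ((w i₀)⁻¹ * x i₀) with hS'
    have hevalv : ∀ (x : Fin (m + 1) → ℝ) q, eval x (aeval v q) = eval (S x) q := by
      intro x q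
      rw [my_eval_aeval]
      have hfun : (fun i => eval x (v i)) = S x := by
        funext i
        by_cases hii : i = i₀ <;> simp [hv, hS, hii]
      rw [hfun]
    have hevalu : ∀ (x : Fin (m + 1) → ℝ) q, eval x (aeval u q) = eval (S' x) q := by
      intro x q
      rw [my_eval_aeval]
      have hfun : (fun j => eval x (u j)) = S' x := by
        funext j
        by_cases hj : j = 0 <;> simp [hu, hS', hj]
      rw [hfun]
    have hσ0 : σ 0 = i₀ := Equiv.swap_apply_left 0 i₀
    have hσi₀ : σ i₀ = 0 := Equiv.swap_apply_right 0 i₀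
    have hσσ : ∀ i, σ (σ i) = i := fun i => Equiv.swap_apply_self _ _ i
    have hσz : ∀ i, σ i = 0 ↔ i = i₀ := by
      intro i
      constructor
      · intro hzz; have := congrArg σ hzz; rwa [hσσ, hσ0] at this
      · rintro rfl; exact hσi₀
    have hσiz : ∀ j, σ j = i₀ ↔ j = 0 := by
      intro j
      constructor
      · intro hzz; have := congrArg σ hzz; rwa [hσσ, hσi₀] at this
      · rintro rfl; exact hσ0
    have hSS' : ∀ x, S (S' x) = x := by
      intro x
      funext i
      by_cases hii : i = i₀
      · subst hii
        simp [hS, hS']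
        field_simp
      · have hσi : σ i ≠ 0 := fun hc => hii ((hσz i).mp hc)
        simp only [hS, hS', if_neg hii, if_pos rfl, if_neg hσi, hσσ, eq_self_iff_true, if_true]
        field_simp
        ring
    have hS'S : ∀ x, S' (S x) = x := by
      intro x
      funext j
      by_cases hj : j = 0
      · subst hj
        simp only [hS', hS, if_pos rfl, if_true, eq_self_iff_true, add_zero]
        field_simp
      · have hσj : σ j ≠ i₀ := fun hc => hj ((hσiz j).mp hc)
        simp only [hS', hS, if_neg hj, if_neg hσj, hσσ, eq_self_iff_true, if_true, add_zero]
        field_simp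
        ring
    -- the substitutions are mutually inverse ring maps
    have hvu : ∀ q, aeval v (aeval u q) = q := by
      intro q
      apply MvPolynomial.funext
      intro x
      rw [hevalv, hevalu, hS'S]
    have huv : ∀ q, aeval u (aeval v q) = q := by
      intro q
      apply MvPolynomial.funext
      intro x
      rw [hevalu, hevalv, hSS']
    set E : MvPolynomial (Fin (m + 1)) ℝ ≃ₐ[ℝ] MvPolynomial (Fin (m + 1)) ℝ :=
      AlgEquiv.ofAlgHom (aeval v) (aeval u)
        (AlgHom.ext fun q => hvu q) (AlgHom.ext fun q => huv q) with hE
    -- transformed data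
    have hirr' : Irreducible (aeval v p : MvPolynomial (Fin (m + 1)) ℝ) := by
      have : (aeval v p : MvPolynomial (Fin (m + 1)) ℝ) = E p := rfl
      rw [this]
      exact hirr.map E
    have hvan' : ∀ x, eval x (aeval v p) = 0 → eval x (aeval v h) = 0 := by
      intro x hx
      rw [hevalv] at hx ⊢
      exact hvan _ hx
    -- the two distinguished points
    set za : Fin (m + 1) → ℝ := S' a with hza
    set zb : Fin (m + 1) → ℝ := S' b with hzb
    have hevza : eval za (aeval v p) = eval a p := by rw [hevalv, hza, hSS']
    have hevzb : eval zb (aeval v p) = eval b p := by rw [hevalv, hzb, hSS']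
    have htail : Fin.tail za = Fin.tail zb := by
      funext j
      have hj : (Fin.succ j : Fin (m + 1)) ≠ 0 := Fin.succ_ne_zero j
      simp only [Fin.tail, hza, hzb, hS', if_neg hj]
      have : w (σ j.succ) = a (σ j.succ) - b (σ j.succ) := rfl
      have hwi : w i₀ = a i₀ - b i₀ := rfl
      field_simp
      ring
    have hdvd' : (aeval v p : MvPolynomial (Fin (m + 1)) ℝ) ∣ aeval v h := by
      apply dvd_of_vanish_aux (aeval v p) (aeval v h) hirr' hvan' (Fin.tail za) (za 0) (zb 0)
      · rw [Fin.cons_self_tail za, hevza]; exact ha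
      · rw [htail, Fin.cons_self_tail zb, hevzb]; exact hb
    obtain ⟨g, hg⟩ := hdvd'
    refine ⟨aeval u g, ?_⟩
    have := congrArg (aeval u) hg
    rw [huv, map_mul, huv] at this
    exact this


/-- A sum of squares of forms (homogeneous polynomials). -/
def IsSosForms {n : ℕ} (f : MvPolynomial (Fin n) ℝ) : Prop :=
  ∃ (k : ℕ) (h : Fin k → MvPolynomial (Fin n) ℝ),
    (∀ i, ∃ d, (h i).IsHomogeneous d) ∧ f = ∑ i, h i ^ 2

theorem psd_not_sos_mul_sq_irred_indef
    (n d r : ℕ) (f p : MvPolynomial (Fin n) ℝ)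
    (hf : f.IsHomogeneous (2 * d))
    (hfpsd : ∀ x : Fin n → ℝ, 0 ≤ eval x f)
    (hfnsos : ¬ IsSosForms f)
    (hp : p.IsHomogeneous r)
    (hpirr : Irreducible p)
    (hpind : (∃ x : Fin n → ℝ, 0 < eval x p) ∧ (∃ y : Fin n → ℝ, eval y p < 0)) :
    (p ^ 2 * f).IsHomogeneous (2 * d + 2 * r) ∧
      (∀ x : Fin n → ℝ, 0 ≤ eval x (p ^ 2 * f)) ∧ ¬ IsSosForms (p ^ 2 * f) := by
  classical
  obtain ⟨⟨a, ha⟩, ⟨b, hb⟩⟩ := hpind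
  have hp0 : p ≠ 0 := hpirr.ne_zero
  refine ⟨?_, ?_, ?_⟩
  · have := (hp.pow 2).mul hf
    rwa [show r * 2 + 2 * d = 2 * d + 2 * r by ring] at this
  · intro x
    rw [map_mul, map_pow]
    exact mul_nonneg (sq_nonneg _) (hfpsd x)
  · rintro ⟨k, hs, hhom, heq⟩
    apply hfnsos
    -- each hs i vanishes on the zero set of p, hence is divisible by p
    have hdvd : ∀ i, p ∣ hs i := by
      intro i
      apply dvd_of_vanish p (hs i) hpirr a b ha hb
      intro x hx
      have hz : ∑ j, (eval x (hs j)) ^ 2 = 0 := by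
        have := congrArg (eval x) heq
        simp only [map_mul, map_pow, map_sum, hx] at this
        simpa using this.symm
      have := (Finset.sum_eq_zero_iff_of_nonneg (fun j _ => sq_nonneg (eval x (hs j)))).mp hz
        i (Finset.mem_univ i)
      exact (pow_eq_zero_iff two_ne_zero).mp this
    choose g hg using hdvd
    refine ⟨k, g, ?_, ?_⟩
    · intro i
      obtain ⟨di, hdi⟩ := hhom i
      exact ⟨di - r, isHomogeneous_of_mul_left hp hp0 (by rw [← hg i]; exact hdi)⟩
    · have hkey : p ^ 2 * f = p ^ 2 * ∑ i, g i ^ 2 := by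
        rw [heq]
        rw [Finset.mul_sum]
        apply Finset.sum_congr rfl
        intro i _
        rw [hg i]
        ring
      exact mul_left_cancel₀ (pow_ne_zero 2 hp0) hkey
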